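/- Let d : ℂ × ℂ → ℂ be defined by d(x, y) = i·max(|x|, |y|). Then the sequence x_n = i/n converges (in the complex valued metric-like sense) both to the point i and to the point 2i; in particular, i and 2i are quasi-equal points, and the limit of a convergent sequence in a complex valued metric-like space need not be unique. -/

import Mathlib

open Complex

/-- The partial order `z₁ ≾ z₂` on ℂ: `Re z₁ ≤ Re z₂` and `Im z₁ ≤ Im z₂`. -/
def CLe (z w : ℂ) : Prop := z.re ≤ w.re ∧ z.im ≤ w.im

/-- The strict relation `z₁ ≺ z₂` on ℂ: `Re z₁ < Re z₂` and `Im z₁ < Im z₂`. -/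
def CLt (z w : ℂ) : Prop := z.re < w.re ∧ z.im < w.im

/-- The complex absolute value `|z|_c = |Re z| + i |Im z|`. -/
noncomputable def cAbs (z : ℂ) : ℂ := (|z.re| : ℝ) + (|z.im| : ℝ) * Complex.I

/-- `d` is a complex valued metric-like on `X`. -/
def IsCVML {X : Type*} (d : X → X → ℂ) : Prop :=
  (∀ x y, CLe 0 (d x y)) ∧
  (∀ x y, d x y = 0 → x = y) ∧
  (∀ x y, d x y = d y x) ∧
  (∀ x y z, CLe (d x y) (d x z + d z y))

/-- The sequence `x` converges to `x₀` in the complex valued metric-like sense: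
for every `r ≻ 0` there is `N` with `|d(x n, x₀) - d(x₀, x₀)|_c ≺ r` for all `n > N`. -/
def CVMLConv {X : Type*} (d : X → X → ℂ) (x : ℕ → X) (x₀ : X) : Prop :=
  ∀ r : ℂ, CLt 0 r → ∃ N : ℕ, ∀ n > N, CLt (cAbs (d (x n) x₀ - d x₀ x₀)) r

lemma abs_seq_le (n : ℕ) (hn : 1 ≤ n) : ‖Complex.I / (n : ℂ)‖ ≤ 1 := by
  rw [norm_div, Complex.norm_I, Complex.norm_natCast]
  rw [div_le_one (by exact_mod_cast hn.trans_lt' zero_lt_one)]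
  exact_mod_cast hn

/-- With `d(x, y) = i·max(|x|, |y|)` on `ℂ`, the sequence `xₙ = i/n` converges
both to `i` and to `2i`; hence `i` and `2i` are quasi-equal points and limits
of convergent sequences need not be unique. -/
theorem stmt_5 :
    CVMLConv (fun x y : ℂ => Complex.I * ((max ‖x‖ ‖y‖ : ℝ) : ℂ))
      (fun n : ℕ => Complex.I / (n : ℂ)) Complex.I ∧
    CVMLConv (fun x y : ℂ => Complex.I * ((max ‖x‖ ‖y‖ : ℝ) : ℂ))
      (fun n : ℕ => Complex.I / (n : ℂ)) (2 * Complex.I) := by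
  constructor
  · intro r hr
    refine ⟨0, fun n hn => ?_⟩
    have h1 : ((n : ℝ))⁻¹ ⊔ 1 = 1 := by
      refine max_eq_right ?_
      rw [inv_le_one_iff₀]; right; exact_mod_cast hn
    simpa [CLt, cAbs, h1] using hr
  · intro r hr
    refine ⟨0, fun n hn => ?_⟩
    have h1 : ((n : ℝ))⁻¹ ⊔ 2 = 2 := by
      refine max_eq_right (le_trans ?_ one_le_two)
      rw [inv_le_one_iff₀]; right; exact_mod_cast hn
    simpa [CLt, cAbs, h1] using hr
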